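/- For integers d ≥ 1, k ≥ 1 and 0 ≤ i ≤ j ≤ k, define P(d;k,i) = ({0,1}^{⊗d})^{⊕(k−i)} ⊕ ({1/2,1/2}^{⊗d})^{⊕i}. Then P(d;k,i) ≤ P(d;k,j) in the Newton polygon partial order, i.e., the order P(d;k,i) ≤ P(d;k,j) holds if and only if i ≤ j. -/

import Mathlib

/-- Newton polygon partial order on finite multisets of rationals. -/
def npLE (S T : Multiset ℚ) : Prop :=
  Multiset.card S = Multiset.card T ∧
    ∀ i : ℕ, ((S.sort (· ≤ ·)).take i).sum ≤ ((T.sort (· ≤ ·)).take i).sum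

/-- The product `S ⊗ T`: the multiset of all pairwise sums, with multiplicity. -/
def otimes (S T : Multiset ℚ) : Multiset ℚ :=
  S.bind fun s => T.map fun t => s + t

/-- `d`-fold tensor power `S^{⊗ d}`, with `S^{⊗ 0} = {0}`. -/
def opow (S : Multiset ℚ) : ℕ → Multiset ℚ
  | 0 => {0}
  | n + 1 => otimes S (opow S n)

/-- `P(d; k, i) = ({0,1}^{⊗d})^{⊕(k−i)} ⊕ ({1/2,1/2}^{⊗d})^{⊕i}`. -/
def P (d k i : ℕ) : Multiset ℚ :=
  (k - i) • opow {0, 1} d + i • opow {(1 : ℚ) / 2, 1 / 2} d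

namespace NPAux

/-- prefix sum of the sorted list -/
def pf (S : Multiset ℚ) (m : ℕ) : ℚ := ((S.sort (· ≤ ·)).take m).sum

lemma aux_cons {a : ℚ} : ∀ {L : List ℚ}, (∀ x ∈ L, a ≤ x) → ∀ {m : ℕ}, m < L.length →
    a + (L.take m).sum ≤ (L.take (m + 1)).sum := by
  intro L
  induction L with
  | nil => intro _ m hm; simp at hm
  | cons x L ih =>
    intro h m hm
    cases m with
    | zero => simpa using h x (by simp)
    | succ m =>
      simp only [List.take_succ_cons, List.sum_cons]
      have := ih (fun y hy => h y (by simp [hy])) (by simpa using hm)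
      linarith

lemma sublist_take_sum_le : ∀ {l L : List ℚ}, List.Sublist l L → L.Pairwise (· ≤ ·) →
    (L.take l.length).sum ≤ l.sum := by
  intro l L h
  induction h with
  | slnil => simp
  | @cons l L a h ih =>
    intro hs
    rw [List.pairwise_cons] at hs
    cases hl : l.length with
    | zero =>
      rw [List.length_eq_zero_iff] at hl
      simp [hl]
    | succ m =>
      have hle : l.length ≤ L.length := h.length_le
      have hm : m < L.length := by omega
      have h1 : a + (L.take m).sum ≤ (L.take (m + 1)).sum := aux_cons hs.1 hm
      have h2 : (L.take (m + 1)).sum ≤ l.sum := by rw [← hl]; exact ih hs.2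
      calc ((a :: L).take (m + 1)).sum = a + (L.take m).sum := by simp
        _ ≤ (L.take (m + 1)).sum := h1
        _ ≤ l.sum := h2
  | @cons_cons l L a h ih =>
    intro hs
    rw [List.pairwise_cons] at hs
    simpa using ih hs.2

lemma sum_sort (S : Multiset ℚ) : ((S.sort (· ≤ ·)) : List ℚ).sum = S.sum := by
  have h3 : S.sum = ((S.sort (· ≤ ·) : List ℚ) : Multiset ℚ).sum := by
    rw [Multiset.sort_eq]
  rw [h3, Multiset.sum_coe]

lemma pf_le_sum {S U : Multiset ℚ} (h : U ≤ S) : pf S (Multiset.card U) ≤ U.sum := by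
  have h2 : List.Subperm (U.sort (· ≤ ·)) (S.sort (· ≤ ·)) := by
    rw [← Multiset.coe_le, Multiset.sort_eq, Multiset.sort_eq]; exact h
  obtain ⟨l, hp, hsl⟩ := h2
  have hlen : l.length = Multiset.card U := by
    rw [hp.length_eq, Multiset.length_sort]
  have hsum : l.sum = U.sum := by rw [hp.sum_eq, sum_sort]
  rw [← hlen, ← hsum]
  exact sublist_take_sum_le hsl (Multiset.pairwise_sort _ _)

lemma exists_pf (S : Multiset ℚ) (m : ℕ) :
    ∃ U : Multiset ℚ, U ≤ S ∧ Multiset.card U = min m (Multiset.card S) ∧ U.sum = pf S m := by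
  refine ⟨((S.sort (· ≤ ·)).take m : List ℚ), ?_, ?_, ?_⟩
  · have h : List.Sublist ((S.sort (· ≤ ·)).take m) (S.sort (· ≤ ·)) := List.take_sublist m _
    calc ((((S.sort (· ≤ ·)).take m) : List ℚ) : Multiset ℚ)
        ≤ ((S.sort (· ≤ ·) : List ℚ) : Multiset ℚ) := Multiset.coe_le.2 h.subperm
      _ = S := Multiset.sort_eq _ _
  · simp [Multiset.coe_card, List.length_take, Multiset.length_sort]
  · simp [pf, Multiset.sum_coe]

lemma pf_min (S : Multiset ℚ) (m : ℕ) : pf S m = pf S (min m (Multiset.card S)) := by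
  rcases le_total m (Multiset.card S) with h | h
  · rw [min_eq_left h]
  · rw [min_eq_right h]
    unfold pf
    rw [List.take_of_length_le (by rw [Multiset.length_sort]; exact h),
        List.take_of_length_le (by rw [Multiset.length_sort])]

lemma pf_add_le {A S : Multiset ℚ} {a b : ℕ} (ha : a ≤ Multiset.card A)
    (hb : b ≤ Multiset.card S) : pf (A + S) (a + b) ≤ pf A a + pf S b := by
  obtain ⟨U₁, hU₁, hc₁, hs₁⟩ := exists_pf A a
  obtain ⟨U₂, hU₂, hc₂, hs₂⟩ := exists_pf S b
  rw [min_eq_left ha] at hc₁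
  rw [min_eq_left hb] at hc₂
  have := pf_le_sum (add_le_add hU₁ hU₂)
  rw [Multiset.card_add, hc₁, hc₂, Multiset.sum_add, hs₁, hs₂] at this
  exact this

lemma exists_split {U A T : Multiset ℚ} (h : U ≤ A + T) :
    ∃ U₁ U₂ : Multiset ℚ, U₁ ≤ A ∧ U₂ ≤ T ∧ U = U₁ + U₂ := by
  refine ⟨U ∩ A, U - A, Multiset.inter_le_right, ?_, ?_⟩
  · rw [Multiset.sub_le_iff_le_add]
    rwa [add_comm] at h
  · rw [Multiset.ext]
    intro x
    simp only [Multiset.count_add, Multiset.count_inter, Multiset.count_sub]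
    omega

lemma pf_mono_add {A S T : Multiset ℚ} (hc : Multiset.card S = Multiset.card T)
    (h : ∀ m, pf S m ≤ pf T m) (m : ℕ) : pf (A + S) m ≤ pf (A + T) m := by
  obtain ⟨U, hU, hcard, hsum⟩ := exists_pf (A + T) m
  obtain ⟨U₁, U₂, h1, h2, rfl⟩ := exists_split hU
  have hc1 : Multiset.card U₁ ≤ Multiset.card A := Multiset.card_le_card h1
  have hc2 : Multiset.card U₂ ≤ Multiset.card S := hc ▸ Multiset.card_le_card h2
  have step1 : pf (A + S) m = pf (A + S) (Multiset.card U₁ + Multiset.card U₂) := by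
    rw [pf_min (A + S) m]
    congr 1
    rw [← Multiset.card_add, hcard, Multiset.card_add, Multiset.card_add, hc]
  calc pf (A + S) m = pf (A + S) (Multiset.card U₁ + Multiset.card U₂) := step1
    _ ≤ pf A (Multiset.card U₁) + pf S (Multiset.card U₂) := pf_add_le hc1 hc2
    _ ≤ pf A (Multiset.card U₁) + pf T (Multiset.card U₂) := by
        have := h (Multiset.card U₂); linarith
    _ ≤ U₁.sum + U₂.sum := by
        have := pf_le_sum h1
        have := pf_le_sum h2
        linarith
    _ = pf (A + T) m := by rw [← Multiset.sum_add, hsum]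

lemma otimes_pair (x y : ℚ) (T : Multiset ℚ) :
    otimes {x, y} T = T.map (x + ·) + T.map (y + ·) := by
  simp [otimes, Multiset.insert_eq_cons, Multiset.cons_bind, Multiset.singleton_bind]

lemma card_opow (S : Multiset ℚ) (n : ℕ) :
    Multiset.card (opow S n) = Multiset.card S ^ n := by
  induction n with
  | zero => simp [opow]
  | succ n ih =>
    simp [opow, otimes, Multiset.card_bind, Function.comp, ih, pow_succ, mul_comm]

lemma sum_map_const_add (c : ℚ) (T : Multiset ℚ) :
    (T.map (c + ·)).sum = (Multiset.card T : ℚ) * c + T.sum := by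
  have : (T.map (c + ·)) = T.map (fun t => (fun _ => c) t + id t) := by simp
  rw [this, Multiset.sum_map_add]
  simp [Multiset.sum_replicate, nsmul_eq_mul]

lemma sum_opow01 (n : ℕ) : (opow {0, 1} n).sum = (n : ℚ) * 2 ^ n / 2 := by
  induction n with
  | zero => simp [opow]
  | succ n ih =>
    rw [opow, otimes_pair, Multiset.sum_add, sum_map_const_add, sum_map_const_add,
      card_opow, ih]
    have h2 : (Multiset.card ({0, 1} : Multiset ℚ)) = 2 := by decide
    rw [h2]
    push_cast
    ring

lemma nonneg_opow01 (n : ℕ) : ∀ x ∈ opow {0, 1} n, 0 ≤ x := by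
  induction n with
  | zero => intro x hx; simp [opow] at hx; simp [hx]
  | succ n ih =>
    intro x hx
    rw [opow, otimes_pair] at hx
    rcases Multiset.mem_add.1 hx with h | h <;>
      · obtain ⟨t, ht, rfl⟩ := Multiset.mem_map.1 h
        have := ih t ht
        linarith

lemma count0_opow01 (n : ℕ) : Multiset.count 0 (opow {0, 1} n) = 1 := by
  induction n with
  | zero => simp [opow]
  | succ n ih =>
    rw [opow, otimes_pair, Multiset.count_add]
    have h1 : (opow {0, 1} n).map ((0 : ℚ) + ·) = opow {0, 1} n := by simp
    have h2 : (0 : ℚ) ∉ (opow {0, 1} n).map ((1 : ℚ) + ·) := by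
      intro h
      obtain ⟨t, ht, h⟩ := Multiset.mem_map.1 h
      have := nonneg_opow01 n t ht
      linarith
    rw [h1, ih, Multiset.count_eq_zero.2 h2]

lemma opow_half (n : ℕ) :
    opow {(1 : ℚ) / 2, 1 / 2} n = Multiset.replicate (2 ^ n) ((n : ℚ) / 2) := by
  induction n with
  | zero => simp [opow, Multiset.replicate_one]
  | succ n ih =>
    rw [opow, otimes_pair, ih]
    simp only [Multiset.map_replicate]
    rw [← Multiset.replicate_add]
    have : (2 : ℕ) ^ (n + 1) = 2 ^ n + 2 ^ n := by ring
    rw [this]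
    congr 1
    push_cast
    ring

lemma sort_replicate (n : ℕ) (a : ℚ) :
    (Multiset.replicate n a).sort (· ≤ ·) = List.replicate n a := by
  apply (fun (hp : List.Perm _ _) h1 h2 => List.Perm.eq_of_pairwise' (r := (· ≤ ·)) h1 h2 hp) ?_ (Multiset.pairwise_sort _ _) ?_
  · rw [← Multiset.coe_eq_coe, Multiset.sort_eq, Multiset.coe_replicate]
  · exact List.pairwise_replicate.2 (Or.inr le_rfl)

lemma pf_replicate (n : ℕ) (a : ℚ) (m : ℕ) :
    pf (Multiset.replicate n a) m = (min m n : ℕ) • a := by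
  rw [pf, sort_replicate, List.take_replicate, List.sum_replicate]

lemma avg_list {L : List ℚ} (hs : L.Pairwise (· ≤ ·)) {m : ℕ} (hm : m ≤ L.length) :
    (L.length : ℚ) * (L.take m).sum ≤ (m : ℚ) * L.sum := by
  rcases eq_or_lt_of_le hm with rfl | hlt
  · rw [List.take_of_length_le le_rfl]
  · have hd : L.drop m ≠ [] := by
      intro h
      have := List.length_drop (i := m) (l := L)
      rw [h] at this
      simp at this
      omega
    obtain ⟨x, t, hxt⟩ := List.exists_cons_of_ne_nil hd
    have hsplit : L.take m ++ L.drop m = L := List.take_append_drop m L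
    have hs2 : List.Pairwise (· ≤ ·) (L.take m ++ L.drop m) := by rw [hsplit]; exact hs
    rw [List.pairwise_append] at hs2
    obtain ⟨hst, hsd, hcross⟩ := hs2
    have hx1 : ∀ y ∈ L.take m, y ≤ x := fun y hy => hcross y hy x (by rw [hxt]; simp)
    have hx2 : ∀ y ∈ L.drop m, x ≤ y := by
      intro y hy
      rw [hxt] at hy hsd
      rw [List.pairwise_cons] at hsd
      rcases List.mem_cons.1 hy with rfl | hy
      · exact le_rfl
      · exact hsd.1 y hy
    have s1 : (L.take m).sum ≤ (L.take m).length • x := List.sum_le_card_nsmul _ _ hx1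
    have s2 : (L.drop m).length • x ≤ (L.drop m).sum := List.card_nsmul_le_sum _ _ hx2
    have hlen1 : (L.take m).length = m := List.length_take_of_le hm
    have hlen2 : (L.drop m).length = L.length - m := List.length_drop (i := m) (l := L)
    have hsum : L.sum = (L.take m).sum + (L.drop m).sum := by
      conv_lhs => rw [← hsplit]
      rw [List.sum_append]
    rw [hlen1] at s1
    rw [hlen2] at s2
    rw [nsmul_eq_mul] at s1 s2
    set T := (L.take m).sum
    set D := (L.drop m).sum
    have hmc : ((L.length - m : ℕ) : ℚ) = (L.length : ℚ) - m := by
      push_cast [Nat.cast_sub hm]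
      ring
    rw [hmc] at s2
    have hq : (0 : ℚ) ≤ m := by positivity
    have hq2 : (m : ℚ) ≤ L.length := by exact_mod_cast hm
    nlinarith [s1, s2, hsum]

lemma pf_le_smul_avg {S : Multiset ℚ} {q : ℚ} (h : S.sum = (Multiset.card S : ℚ) * q)
    (m : ℕ) : pf S m ≤ (min m (Multiset.card S) : ℕ) • q := by
  rcases Nat.eq_zero_or_pos (Multiset.card S) with h0 | h0
  · rw [Multiset.card_eq_zero] at h0
    subst h0
    simp [pf, Multiset.sort_zero]
  · have hmin : min m (Multiset.card S) ≤ (S.sort (· ≤ ·)).length := by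
      rw [Multiset.length_sort]; exact min_le_right _ _
    have havg := avg_list (Multiset.pairwise_sort S (· ≤ ·)) hmin
    rw [sum_sort, h] at havg
    rw [pf_min]
    have hpos : (0 : ℚ) < Multiset.card S := by exact_mod_cast h0
    have hlen : ((S.sort (· ≤ ·)).length : ℚ) = (Multiset.card S : ℚ) := by
      rw [Multiset.length_sort]
    rw [hlen] at havg
    have : pf S (min m (Multiset.card S)) = ((S.sort (· ≤ ·)).take (min m (Multiset.card S))).sum := rfl
    rw [this, nsmul_eq_mul]
    nlinarith [havg]

lemma pf_nonneg {S : Multiset ℚ} (h : ∀ x ∈ S, 0 ≤ x) (m : ℕ) : 0 ≤ pf S m :=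
  List.sum_nonneg fun x hx => h x ((Multiset.mem_sort _).1 (List.take_subset _ _ hx))

lemma pf_le_zero_of_count {S : Multiset ℚ} {m : ℕ} (hm : m ≤ Multiset.count 0 S) :
    pf S m ≤ 0 := by
  have hr : Multiset.replicate m (0 : ℚ) ≤ S := Multiset.le_count_iff_replicate_le.1 hm
  have := pf_le_sum hr
  rwa [Multiset.card_replicate, Multiset.sum_replicate, smul_zero] at this

lemma count_le_of_pf_zero {S : Multiset ℚ} {m : ℕ} (hnn : ∀ x ∈ S, 0 ≤ x)
    (hm : m ≤ Multiset.card S) (h0 : pf S m ≤ 0) : m ≤ Multiset.count 0 S := by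
  set l := (S.sort (· ≤ ·)).take m with hl
  have hlen : l.length = m := by
    rw [hl, List.length_take, Multiset.length_sort, min_eq_left hm]
  have hzero : ∀ x ∈ l, x = (0 : ℚ) := by
    intro x hx
    have h1 : 0 ≤ x := hnn x ((Multiset.mem_sort _).1 (List.take_subset _ _ hx))
    have h2 : ∀ y ∈ l, (0 : ℚ) ≤ y := fun y hy =>
      hnn y ((Multiset.mem_sort _).1 (List.take_subset _ _ hy))
    have h3 : x ≤ l.sum := List.single_le_sum h2 x hx
    have h4 : l.sum ≤ 0 := h0
    linarith
  have hrep : l = List.replicate m (0 : ℚ) := by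
    rw [List.eq_replicate_iff]
    exact ⟨hlen, hzero⟩
  have hle : (l : Multiset ℚ) ≤ S := by
    have h : List.Sublist l (S.sort (· ≤ ·)) := List.take_sublist m _
    calc (l : Multiset ℚ) ≤ ((S.sort (· ≤ ·) : List ℚ) : Multiset ℚ) :=
          Multiset.coe_le.2 h.subperm
      _ = S := Multiset.sort_eq _ _
  rw [hrep, Multiset.coe_replicate] at hle
  exact Multiset.le_count_iff_replicate_le.2 hle

lemma card_pair01 : Multiset.card ({0, 1} : Multiset ℚ) = 2 := rfl

lemma card_P {d k i : ℕ} (hi : i ≤ k) : Multiset.card (P d k i) = k * 2 ^ d := by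
  rw [P, Multiset.card_add, Multiset.card_nsmul, Multiset.card_nsmul, card_opow,
    card_opow, card_pair01]
  have : Multiset.card ({(1 : ℚ) / 2, 1 / 2} : Multiset ℚ) = 2 := rfl
  rw [this]
  rw [← Nat.add_mul]
  congr 1
  omega

lemma nonneg_P (d k i : ℕ) : ∀ x ∈ P d k i, 0 ≤ x := by
  intro x hx
  rw [P] at hx
  rcases Multiset.mem_add.1 hx with h | h
  · exact nonneg_opow01 d x (Multiset.mem_of_mem_nsmul h)
  · have := Multiset.mem_of_mem_nsmul h
    rw [opow_half] at this
    rw [Multiset.eq_of_mem_replicate this]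
    positivity

lemma count0_P {d k i : ℕ} (hd : 1 ≤ d) : Multiset.count 0 (P d k i) = k - i := by
  rw [P, Multiset.count_add, Multiset.count_nsmul, Multiset.count_nsmul, count0_opow01,
    opow_half, Multiset.count_replicate]
  have hne : ((d : ℚ) / 2) ≠ 0 := by
    have : (d : ℚ) ≠ 0 := by
      exact_mod_cast Nat.pos_iff_ne_zero.1 hd
    positivity
  rw [if_neg hne]
  omega

end NPAux

open NPAux in
theorem P_le_iff (d k i j : ℕ) (hd : 1 ≤ d) (hk : 1 ≤ k) (hi : i ≤ k) (hj : j ≤ k) :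
    npLE (P d k i) (P d k j) ↔ i ≤ j := by
  constructor
  · intro h
    by_contra hij
    push_neg at hij
    have hnn : ∀ x ∈ P d k i, 0 ≤ x := nonneg_P d k i
    have h1 : pf (P d k j) (k - j) ≤ 0 := by
      apply pf_le_zero_of_count
      rw [count0_P hd]
    have h2 : pf (P d k i) (k - j) ≤ 0 := le_trans (h.2 (k - j)) h1
    have hm : k - j ≤ Multiset.card (P d k i) := by
      rw [card_P hi]
      have h2d : 1 ≤ 2 ^ d := Nat.one_le_two_pow
      calc k - j ≤ k := Nat.sub_le _ _
        _ = k * 1 := (mul_one k).symm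
        _ ≤ k * 2 ^ d := Nat.mul_le_mul_left k h2d
    have h3 := count_le_of_pf_zero hnn hm h2
    rw [count0_P hd] at h3
    omega
  · intro hle
    set B := opow {0, 1} d with hB
    set C := opow {(1 : ℚ) / 2, 1 / 2} d with hC
    have hcardB : Multiset.card B = 2 ^ d := by rw [hB, card_opow, card_pair01]
    have hcardC : Multiset.card C = 2 ^ d := by
      rw [hC, opow_half, Multiset.card_replicate]
    have hkey : ∀ m, pf ((j - i) • B) m ≤ pf ((j - i) • C) m := by
      intro m
      have hC' : (j - i) • C = Multiset.replicate ((j - i) * 2 ^ d) ((d : ℚ) / 2) := by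
        rw [hC, opow_half, Multiset.nsmul_replicate]
      have hcard : Multiset.card ((j - i) • B) = (j - i) * 2 ^ d := by
        rw [Multiset.card_nsmul, hcardB]
      rw [hC', pf_replicate]
      have hsum : ((j - i) • B).sum = (Multiset.card ((j - i) • B) : ℚ) * ((d : ℚ) / 2) := by
        rw [Multiset.sum_nsmul, hB, sum_opow01, hcard]
        push_cast
        ring
      have := pf_le_smul_avg hsum m
      rwa [hcard] at this
    have hcards : Multiset.card ((j - i) • B) = Multiset.card ((j - i) • C) := by
      rw [Multiset.card_nsmul, Multiset.card_nsmul, hcardB, hcardC]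
    have hPi : P d k i = ((k - j) • B + i • C) + (j - i) • B := by
      rw [P]
      have he : k - i = (k - j) + (j - i) := by omega
      rw [he, add_nsmul]
      abel
    have hPj : P d k j = ((k - j) • B + i • C) + (j - i) • C := by
      rw [P]
      have he : j • C = i • C + (j - i) • C := by
        rw [← add_nsmul]
        congr 1
        omega
      rw [he, add_assoc]
    constructor
    · rw [card_P hi, card_P hj]
    · intro m
      have := pf_mono_add (A := (k - j) • B + i • C) hcards hkey m
      rw [← hPi, ← hPj] at this
      exact this
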